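/- Let V be a rank one valuation domain, α ∈ V, γ ∈ Γ_v. If either V is not discrete or the residue field V/M is infinite, then the polynomial closure of the sphere ∂B(α, γ) = {x ∈ K : v(x - α) = γ} is the closed ball B(α, γ). If instead V is a DVR with finite residue field, then ∂B(α, γ) is polynomially closed. -/

import Mathlib

open Polynomial

section Stmt16Aux
variable {K : Type*} [Field K] (v : AddValuation K (WithTop ℝ))

private lemma s16_exists_real {x : K} (hx : x ≠ 0) : ∃ r : ℝ, v x = (r : WithTop ℝ) := by
  cases h : v x with
  | top => exact absurd h (v.ne_top_iff.2 hx)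
  | coe r => exact ⟨r, rfl⟩

private lemma s16_eval_nonneg {h : K[X]} {u : K} (hu : 0 ≤ v u)
    (hc : ∀ i, 0 ≤ v (h.coeff i)) : 0 ≤ v (h.eval u) := by
  rw [Polynomial.eval_eq_sum_range]
  refine v.map_le_sum fun i _ => ?_
  rw [v.map_mul, v.map_pow]
  have h2 : (0 : WithTop ℝ) ≤ i • v u := nsmul_nonneg hu i
  calc (0 : WithTop ℝ) = 0 + 0 := by simp
  _ ≤ v (h.coeff i) + i • v u := add_le_add (hc i) h2

private lemma s16_coeff_mul {p q : K[X]} {A B : ℝ}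
    (hp : ∀ i, (A : WithTop ℝ) ≤ v (p.coeff i)) (hq : ∀ i, (B : WithTop ℝ) ≤ v (q.coeff i)) :
    ∀ i, ((A + B : ℝ) : WithTop ℝ) ≤ v ((p * q).coeff i) := by
  intro i
  rw [Polynomial.coeff_mul]
  refine v.map_le_sum fun x _ => ?_
  rw [v.map_mul]
  push_cast
  exact add_le_add (hp _) (hq _)

private lemma s16_coeff_prod {ι : Type*} (s : Finset ι) (p : ι → K[X]) (A : ι → ℝ)
    (h : ∀ k ∈ s, ∀ i, ((A k : ℝ) : WithTop ℝ) ≤ v ((p k).coeff i)) :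
    ∀ i, ((∑ k ∈ s, A k : ℝ) : WithTop ℝ) ≤ v ((∏ k ∈ s, p k).coeff i) := by
  classical
  induction s using Finset.cons_induction with
  | empty =>
    intro i
    rcases Nat.eq_zero_or_pos i with hi | hi
    · subst hi; simp
    · simp [Polynomial.coeff_one, Nat.pos_iff_ne_zero.1 hi]
  | cons a s ha ih =>
    intro i
    rw [Finset.prod_cons, Finset.sum_cons]
    exact s16_coeff_mul v (h a (Finset.mem_cons_self a s))
      (ih fun k hk => h k (Finset.mem_cons_of_mem hk)) i

private lemma s16_prod_units {ι : Type*} (s : Finset ι) (g : ι → K)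
    (h : ∀ t ∈ s, v (g t) = 0) : v (∏ t ∈ s, g t) = 0 := by
  classical
  induction s using Finset.cons_induction with
  | empty => simp
  | cons a s ha ih =>
    rw [Finset.prod_cons, v.map_mul, h a (Finset.mem_cons_self a s),
      ih fun t ht => h t (Finset.mem_cons_of_mem ht), add_zero]

private lemma s16_prod_nonneg {ι : Type*} (s : Finset ι) (g : ι → K)
    (h : ∀ t ∈ s, 0 ≤ v (g t)) : 0 ≤ v (∏ t ∈ s, g t) := by
  classical
  induction s using Finset.cons_induction with
  | empty => simp
  | cons a s ha ih =>
    rw [Finset.prod_cons, v.map_mul]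
    calc (0 : WithTop ℝ) = 0 + 0 := by simp
    _ ≤ v (g a) + v (∏ t ∈ s, g t) :=
        add_le_add (h a (Finset.mem_cons_self a s)) (ih fun t ht => h t (Finset.mem_cons_of_mem ht))

private lemma s16_min_coeff (h : K[X]) (i₁ : ℕ) (hbad : v (h.coeff i₁) < 0) :
    ∃ m : ℝ, m < 0 ∧ (∃ i₀, v (h.coeff i₀) = (m : WithTop ℝ)) ∧
      ∀ i, (m : WithTop ℝ) ≤ v (h.coeff i) := by
  have hi₁ : i₁ ≤ h.natDegree := by
    by_contra hgt
    rw [Polynomial.coeff_eq_zero_of_natDegree_lt (lt_of_not_ge hgt)] at hbad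
    simp at hbad
  obtain ⟨i₀, hi₀mem, hi₀min⟩ := Finset.exists_min_image (Finset.range (h.natDegree + 1))
    (fun i => v (h.coeff i)) ⟨i₁, Finset.mem_range.2 (Nat.lt_succ_of_le hi₁)⟩
  have hlt : v (h.coeff i₀) < 0 :=
    lt_of_le_of_lt (hi₀min i₁ (Finset.mem_range.2 (Nat.lt_succ_of_le hi₁))) hbad
  have hne : h.coeff i₀ ≠ 0 := by
    intro h0; rw [h0] at hlt; simp at hlt
  obtain ⟨m, hm⟩ := s16_exists_real v hne
  refine ⟨m, ?_, ⟨i₀, hm⟩, fun i => ?_⟩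
  · rw [hm] at hlt; exact_mod_cast hlt
  · rcases le_or_gt i h.natDegree with hle | hgt
    · rw [← hm]; exact hi₀min i (Finset.mem_range.2 (Nat.lt_succ_of_le hle))
    · rw [Polynomial.coeff_eq_zero_of_natDegree_lt hgt]; simp

private lemma s16_key_dense
    (hdense : ∀ a b : ℝ, a < b → ∃ s : ℝ, a < s ∧ s < b ∧ ∃ x : K, x ≠ 0 ∧ v x = (s : WithTop ℝ))
    (h : K[X]) (hs : ∀ u : K, v u = 0 → 0 ≤ v (h.eval u)) : ∀ i, 0 ≤ v (h.coeff i) := by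
  classical
  by_contra hc
  push_neg at hc
  obtain ⟨i₁, hi₁⟩ := hc
  obtain ⟨m, hm0, ⟨i₀, hi₀⟩, hmin⟩ := s16_min_coeff v h i₁ hi₁
  set n := h.natDegree with hn
  have hmneg : (0:ℝ) < -m := neg_pos.2 hm0
  set η : ℝ := -m / (n + 1) with hηdef
  have hηpos : 0 < η := div_pos hmneg (by positivity)
  -- pick points with valuations in disjoint subintervals of (0, η)
  have hpts : ∀ j : Fin (n + 1), ∃ s : ℝ,
      η * ((j:ℝ) + 1) / ((n:ℝ) + 2) < s ∧ s < η * ((j:ℝ) + 2) / ((n:ℝ) + 2) ∧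
      ∃ x : K, x ≠ 0 ∧ v x = (s : WithTop ℝ) := by
    intro j
    refine hdense _ _ ?_
    gcongr
    · norm_num
  choose sv hs1 hs2 t ht0 htv using hpts
  have hs0 : ∀ j, 0 < sv j := fun j =>
    lt_trans (by positivity) (hs1 j)
  have hsη : ∀ j, sv j < η := fun j => by
    have h2 : η * ((j:ℝ) + 2) / ((n:ℝ) + 2) ≤ η := by
      rw [div_le_iff₀ (by positivity : (0:ℝ) < (n:ℝ)+2)]
      have hj : (j:ℝ) + 2 ≤ (n:ℝ) + 2 := by
        have hj1 := j.is_le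
        have hj2 : (j:ℝ) ≤ (n:ℝ) := by exact_mod_cast hj1
        linarith
      nlinarith
    exact lt_of_lt_of_le (hs2 j) h2
  have hsinj : Function.Injective sv := by
    have hmono : ∀ {j k : Fin (n+1)}, j < k → sv j < sv k := by
      intro j k hjk
      have hj2k1 : (j:ℝ) + 2 ≤ (k:ℝ) + 1 := by
        have h1 : (j:ℕ) + 1 ≤ (k:ℕ) := hjk
        have h2 : ((j:ℕ):ℝ) + 1 ≤ ((k:ℕ):ℝ) := by exact_mod_cast h1
        linarith
      have h3 : η * ((j:ℝ) + 2) / ((n:ℝ) + 2) ≤ η * ((k:ℝ) + 1) / ((n:ℝ) + 2) := by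
        gcongr
      exact lt_of_lt_of_le (hs2 j) (le_trans h3 (le_of_lt (hs1 k)))
    intro j k hjk
    rcases lt_trichotomy j k with hlt | heq | hgt
    · exact absurd hjk (ne_of_lt (hmono hlt))
    · exact heq
    · exact absurd hjk.symm (ne_of_lt (hmono hgt))
  -- the interpolation nodes
  set u : Fin (n+1) → K := fun j => 1 + t j with hu
  have hvt : ∀ j, v (t j) = ((sv j : ℝ) : WithTop ℝ) := htv
  have hvu : ∀ j, v (u j) = 0 := by
    intro j
    have h1 : v (1 : K) < v (t j) := by
      rw [v.map_one, hvt j]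
      exact_mod_cast hs0 j
    rw [hu]; simpa using v.map_add_eq_of_lt_left h1
  have hdiff : ∀ j k : Fin (n+1), j ≠ k →
      ∃ δ : ℝ, 0 < δ ∧ δ < η ∧ v (u j - u k) = ((δ : ℝ) : WithTop ℝ) := by
    intro j k hjk
    have he : u j - u k = t j - t k := by rw [hu]; ring
    have hne : sv j ≠ sv k := fun hh => hjk (hsinj hh)
    rcases lt_or_gt_of_ne hne with hlt | hgt
    · exact ⟨sv j, hs0 j, hsη j, by
        rw [he, v.map_sub_eq_of_lt_left (by rw [hvt j, hvt k]; exact_mod_cast hlt), hvt j]⟩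
    · exact ⟨sv k, hs0 k, hsη k, by
        rw [he, v.map_sub_eq_of_lt_right (by rw [hvt j, hvt k]; exact_mod_cast hgt), hvt k]⟩
  have huinj : Set.InjOn u (Finset.univ : Finset (Fin (n+1))) := by
    intro j _ k _ hjk
    by_contra hne
    obtain ⟨δ, hδ0, _, hδv⟩ := hdiff j k hne
    rw [hjk, sub_self, v.map_zero] at hδv
    exact (WithTop.coe_ne_top (a := δ)) hδv.symm
  -- Lagrange interpolation
  have hne0 : h ≠ 0 := by
    intro h0
    rw [h0, Polynomial.coeff_zero, v.map_zero] at hi₀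
    exact (WithTop.coe_ne_top (a := m)) hi₀.symm
  have hdeg : h.degree < (Finset.univ : Finset (Fin (n+1))).card := by
    rw [Finset.card_univ, Fintype.card_fin]
    exact lt_of_le_of_lt (Polynomial.degree_le_natDegree)
      (by exact_mod_cast Nat.lt_succ_self n)
  have heq := Lagrange.eq_interpolate huinj hdeg
  -- bound coefficients of basis polynomials
  have hbasis : ∀ j : Fin (n+1), ∀ i,
      (((n : ℝ) * -η : ℝ) : WithTop ℝ) ≤ v ((Lagrange.basis Finset.univ u j).coeff i) := by
    intro j i
    have hb : ∀ k ∈ Finset.univ.erase j, ∀ i',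
        ((-η : ℝ) : WithTop ℝ) ≤ v ((Lagrange.basisDivisor (u j) (u k)).coeff i') := by
      intro k hk i'
      have hkj : j ≠ k := (Finset.ne_of_mem_erase hk).symm
      obtain ⟨δ, hδ0, hδη, hδv⟩ := hdiff j k hkj
      have hvinv : v (u j - u k)⁻¹ = ((-δ : ℝ) : WithTop ℝ) := by
        rw [v.map_inv, hδv]; push_cast; ring
      have hδη' : ((-η : ℝ) : WithTop ℝ) ≤ ((-δ : ℝ) : WithTop ℝ) := by
        exact_mod_cast neg_le_neg (le_of_lt hδη)
      rw [Lagrange.basisDivisor]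
      match i' with
      | 0 =>
        simp only [Polynomial.coeff_C_mul, Polynomial.coeff_sub, Polynomial.coeff_X_zero,
          Polynomial.coeff_C_zero]
        rw [zero_sub, v.map_mul, v.map_neg, hvu k, hvinv, add_zero]
        exact hδη'
      | 1 =>
        simp only [Polynomial.coeff_C_mul, Polynomial.coeff_sub, Polynomial.coeff_X_one,
          Polynomial.coeff_C, if_neg (one_ne_zero (α := ℕ))]
        rw [sub_zero, v.map_mul, hvinv, v.map_one, add_zero]
        exact hδη'
      | (i''+2) =>
        simp only [Polynomial.coeff_C_mul, Polynomial.coeff_sub, Polynomial.coeff_X,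
          Polynomial.coeff_C]
        norm_num
    rw [Lagrange.basis]
    have hp := s16_coeff_prod v (Finset.univ.erase j)
      (fun k => Lagrange.basisDivisor (u j) (u k)) (fun _ => -η) hb i
    rw [Finset.sum_const, Finset.card_erase_of_mem (Finset.mem_univ j), Finset.card_univ,
      Fintype.card_fin, Nat.add_sub_cancel, nsmul_eq_mul] at hp
    exact hp
  -- bound coefficients of h
  have hcoeff : ∀ i, (((n : ℝ) * -η : ℝ) : WithTop ℝ) ≤ v (h.coeff i) := by
    intro i
    conv_rhs => rw [heq]
    rw [Lagrange.interpolate_apply, Polynomial.finset_sum_coeff]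
    refine v.map_le_sum fun j _ => ?_
    rw [Polynomial.coeff_C_mul, v.map_mul]
    calc (((n : ℝ) * -η : ℝ) : WithTop ℝ) = 0 + (((n : ℝ) * -η : ℝ) : WithTop ℝ) := by simp
    _ ≤ v (h.eval (u j)) + v ((Lagrange.basis Finset.univ u j).coeff i) :=
        add_le_add (hs (u j) (hvu j)) (hbasis j i)
  -- contradiction
  have hfin : ((n : ℝ) * -η : ℝ) ≤ m := by
    have h4 := hcoeff i₀
    rw [hi₀] at h4
    exact_mod_cast h4
  have hn1 : (0:ℝ) < (n:ℝ) + 1 := by positivity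
  have h1 : (n:ℝ) * -η = (n:ℝ) * m / ((n:ℝ) + 1) := by rw [hηdef]; ring
  rw [h1, div_le_iff₀ hn1] at hfin
  nlinarith

private lemma s16_key_residue (V : Subring K) (hV : ∀ x : K, x ∈ V ↔ 0 ≤ v x)
    (M : Ideal V) (hM : ∀ x : V, x ∈ M ↔ 0 < v (x : K))
    (hinf : Infinite (V ⧸ M))
    (h : K[X]) (hs : ∀ u : K, v u = 0 → 0 ≤ v (h.eval u)) : ∀ i, 0 ≤ v (h.coeff i) := by
  classical
  by_contra hc
  push_neg at hc
  obtain ⟨i₁, hi₁⟩ := hc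
  obtain ⟨m, hm0, ⟨i₀, hi₀⟩, hmin⟩ := s16_min_coeff v h i₁ hi₁
  have hd0 : h.coeff i₀ ≠ 0 := by
    intro h0; rw [h0, v.map_zero] at hi₀; exact (WithTop.coe_ne_top (a := m)) hi₀.symm
  set d : K := h.coeff i₀ with hd
  set h₁ : K[X] := Polynomial.C d⁻¹ * h with hh₁
  have hvdinv : v d⁻¹ = ((-m : ℝ) : WithTop ℝ) := by
    rw [v.map_inv, hi₀]; push_cast; ring
  have hcoe : ∀ i, v (h₁.coeff i) = v d⁻¹ + v (h.coeff i) := by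
    intro i; rw [hh₁, Polynomial.coeff_C_mul, v.map_mul]
  have hc1 : ∀ i, 0 ≤ v (h₁.coeff i) := by
    intro i
    rw [hcoe i, hvdinv]
    calc (0 : WithTop ℝ) = ((-m + m : ℝ) : WithTop ℝ) := by norm_num
    _ = ((-m : ℝ) : WithTop ℝ) + ((m : ℝ) : WithTop ℝ) := by push_cast; rfl
    _ ≤ ((-m : ℝ) : WithTop ℝ) + v (h.coeff i) := add_le_add le_rfl (hmin i)
  have hc10 : v (h₁.coeff i₀) = 0 := by
    rw [hcoe i₀, hvdinv, hi₀, ← WithTop.coe_add]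
    norm_num
  -- move h₁ into V[X]
  have hsub : (↑h₁.coeffs : Set K) ⊆ (V : Set K) := by
    intro x hx
    obtain ⟨i, _, rfl⟩ := Polynomial.mem_coeffs_iff.1 (Finset.mem_coe.1 hx)
    exact (hV _).2 (hc1 _)
  set H : Polynomial V := h₁.toSubring V hsub with hH
  have hHcoeff : ∀ i, ((H.coeff i : V) : K) = h₁.coeff i := fun i =>
    Polynomial.coeff_toSubring h₁ V hsub
  -- M is prime, quotient is a domain
  have hMprime : M.IsPrime := by
    constructor
    · rw [Ideal.ne_top_iff_one]
      intro h1
      rw [hM] at h1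
      simp only [OneMemClass.coe_one, v.map_one] at h1
      exact lt_irrefl _ h1
    · intro x y hxy
      by_contra hcon
      push_neg at hcon
      obtain ⟨hx, hy⟩ := hcon
      have hx0 : v (x : K) = 0 :=
        le_antisymm (not_lt.1 fun hh => hx ((hM x).2 hh)) ((hV _).1 x.2)
      have hy0 : v (y : K) = 0 :=
        le_antisymm (not_lt.1 fun hh => hy ((hM y).2 hh)) ((hV _).1 y.2)
      have hxy0 : v ((x : K) * (y : K)) = 0 := by rw [v.map_mul, hx0, hy0, add_zero]
      have hlt := (hM (x * y)).1 hxy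
      rw [Subring.coe_mul, hxy0] at hlt
      exact lt_irrefl _ hlt
  haveI := hMprime
  haveI : IsDomain (V ⧸ M) := Ideal.Quotient.isDomain M
  haveI := hinf
  set HQ : Polynomial (V ⧸ M) := H.map (Ideal.Quotient.mk M) with hHQ
  have hHQ0 : HQ ≠ 0 := by
    intro h0
    have hcz : HQ.coeff i₀ = 0 := by rw [h0]; simp
    rw [hHQ, Polynomial.coeff_map] at hcz
    have hmem : H.coeff i₀ ∈ M := (Ideal.Quotient.eq_zero_iff_mem).1 hcz
    have hpos := (hM _).1 hmem
    rw [hHcoeff i₀, hc10] at hpos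
    exact lt_irrefl _ hpos
  -- find a nonzero non-root of HQ
  have hfin : ({z : V ⧸ M | HQ.IsRoot z} ∪ {0}).Finite :=
    (Polynomial.finite_setOf_isRoot hHQ0).union (Set.finite_singleton 0)
  obtain ⟨z, hz⟩ := hfin.infinite_compl.nonempty
  rw [Set.mem_compl_iff, Set.mem_union, not_or] at hz
  obtain ⟨hznr, hz0⟩ := hz
  rw [Set.mem_singleton_iff] at hz0
  obtain ⟨w, hw⟩ := Ideal.Quotient.mk_surjective z
  have hwM : w ∉ M := fun hh => hz0 (by rw [← hw]; exact Ideal.Quotient.eq_zero_iff_mem.2 hh)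
  have hvw : v (w : K) = 0 :=
    le_antisymm (not_lt.1 fun hh => hwM ((hM w).2 hh)) ((hV _).1 w.2)
  -- evaluate
  have hHevalM : H.eval w ∉ M := by
    intro hh
    have hz' : HQ.eval z = 0 := by
      rw [hHQ, ← hw, Polynomial.eval_map, Polynomial.eval₂_at_apply]
      exact Ideal.Quotient.eq_zero_iff_mem.2 hh
    exact hznr hz'
  have hmap : h₁ = H.map (Subring.subtype V) := by
    ext i
    rw [Polynomial.coeff_map]
    exact (hHcoeff i).symm
  have hHeval : ((H.eval w : V) : K) = h₁.eval (w : K) := by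
    conv_rhs => rw [hmap]
    rw [Polynomial.eval_map]
    exact (Polynomial.eval₂_at_apply (Subring.subtype V) w).symm
  have hv1 : v (h₁.eval (w : K)) ≤ 0 := by
    rw [← hHeval]
    exact not_lt.1 fun hh => hHevalM ((hM _).2 hh)
  have hevalh : h.eval (w : K) = d * h₁.eval (w : K) := by
    rw [hh₁, Polynomial.eval_mul, Polynomial.eval_C, ← mul_assoc,
      mul_inv_cancel₀ hd0, one_mul]
  have hle : v (h.eval (w : K)) ≤ ((m : ℝ) : WithTop ℝ) := by
    rw [hevalh, v.map_mul, hi₀]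
    calc ((m:ℝ) : WithTop ℝ) + v (h₁.eval (w:K)) ≤ ((m:ℝ) : WithTop ℝ) + 0 :=
          add_le_add le_rfl hv1
    _ = ((m:ℝ) : WithTop ℝ) := by simp
  have hge := hs (w : K) hvw
  have h5 : (0 : WithTop ℝ) ≤ ((m : ℝ) : WithTop ℝ) := le_trans hge hle
  have h6 : (0:ℝ) ≤ m := by exact_mod_cast h5
  linarith

private lemma s16_dense (hrank : ∃ π : K, 0 < v π ∧ v π ≠ ⊤)
    (hnd : ¬ ∃ ρ : ℝ, 0 < ρ ∧ ∀ x : K, x ≠ 0 → ∃ n : ℤ, v x = (((n : ℝ) * ρ : ℝ) : WithTop ℝ)) :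
    ∀ a b : ℝ, a < b → ∃ s : ℝ, a < s ∧ s < b ∧ ∃ x : K, x ≠ 0 ∧ v x = (s : WithTop ℝ) := by
  set S : AddSubgroup ℝ :=
    { carrier := {r : ℝ | ∃ x : K, x ≠ 0 ∧ v x = (r : WithTop ℝ)}
      add_mem' := by
        rintro a b ⟨x, hx, hvx⟩ ⟨y, hy, hvy⟩
        refine ⟨x * y, mul_ne_zero hx hy, ?_⟩
        rw [v.map_mul, hvx, hvy]
        push_cast
        rfl
      zero_mem' := ⟨1, one_ne_zero, by rw [v.map_one]; norm_num⟩
      neg_mem' := by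
        rintro a ⟨x, hx, hvx⟩
        refine ⟨x⁻¹, inv_ne_zero hx, ?_⟩
        rw [v.map_inv, hvx]
        push_cast
        ring } with hS
  rcases AddSubgroup.dense_or_cyclic S with hdense | ⟨a, hSa⟩
  · intro a b hab
    obtain ⟨s, hsS, hs1, hs2⟩ := dense_iff_exists_between.1 hdense a b hab
    exact ⟨s, hs1, hs2, hsS⟩
  · exfalso
    apply hnd
    obtain ⟨π, hπpos, hπtop⟩ := hrank
    have hπ0 : π ≠ 0 := v.ne_top_iff.1 hπtop
    obtain ⟨r, hr⟩ := s16_exists_real v hπ0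
    have hrpos : 0 < r := by
      rw [hr] at hπpos
      exact_mod_cast hπpos
    have hrS : r ∈ S := ⟨π, hπ0, hr⟩
    have ha0 : a ≠ 0 := by
      intro h0
      rw [h0] at hSa
      rw [hSa, AddSubgroup.mem_closure_singleton] at hrS
      obtain ⟨n, hn⟩ := hrS
      rw [smul_zero] at hn
      linarith
    refine ⟨|a|, abs_pos.2 ha0, fun x hx => ?_⟩
    obtain ⟨s, hs⟩ := s16_exists_real v hx
    have hsS : s ∈ S := ⟨x, hx, hs⟩
    rw [hSa, AddSubgroup.mem_closure_singleton] at hsS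
    obtain ⟨n, hn⟩ := hsS
    have hna : (n : ℝ) * a = s := by rw [← hn, zsmul_eq_mul]
    rcases abs_cases a with ⟨habs, _⟩ | ⟨habs, _⟩
    · refine ⟨n, ?_⟩
      rw [hs]
      congr 1
      rw [habs]
      linarith
    · refine ⟨-n, ?_⟩
      rw [hs]
      congr 1
      rw [habs]
      push_cast
      linarith

end Stmt16Aux

/-- Let `V` be a rank-one valuation domain, `α ∈ V`, `γ ∈ Γ_v`.
If `V` is not discrete or the residue field `V ⧸ M` is infinite, then the
polynomial closure of the sphere `∂B(α,γ) = {x : v (x - α) = γ}` is the closed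
ball `B(α,γ)`.  If `V` is discrete (a DVR) with finite residue field, then
`∂B(α,γ)` is polynomially closed. -/
theorem stmt16 {K : Type*} [Field K] (v : AddValuation K (WithTop ℝ))
    (hrank : ∃ π : K, 0 < v π ∧ v π ≠ ⊤)
    (V : Subring K) (hV : ∀ x : K, x ∈ V ↔ 0 ≤ v x)
    (M : Ideal V) (hM : ∀ x : V, x ∈ M ↔ 0 < v (x : K))
    (α : K) (hα : 0 ≤ v α)
    (γ : ℝ) (hγ : ∃ x : K, x ≠ 0 ∧ v x = (γ : WithTop ℝ)) :
    (((¬ ∃ ρ : ℝ, 0 < ρ ∧ ∀ x : K, x ≠ 0 → ∃ n : ℤ, v x = (((n : ℝ) * ρ : ℝ) : WithTop ℝ)) ∨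
        Infinite (V ⧸ M)) →
      {y : K | ∀ f : Polynomial K,
          (∀ x : K, v (x - α) = (γ : WithTop ℝ) → 0 ≤ v (f.eval x)) → 0 ≤ v (f.eval y)} =
        {y : K | (γ : WithTop ℝ) ≤ v (y - α)}) ∧
    (((∃ ρ : ℝ, 0 < ρ ∧ ∀ x : K, x ≠ 0 → ∃ n : ℤ, v x = (((n : ℝ) * ρ : ℝ) : WithTop ℝ)) ∧
        Finite (V ⧸ M)) →
      {y : K | ∀ f : Polynomial K,
          (∀ x : K, v (x - α) = (γ : WithTop ℝ) → 0 ≤ v (f.eval x)) → 0 ≤ v (f.eval y)} =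
        {y : K | v (y - α) = (γ : WithTop ℝ)}) := by
  classical
  obtain ⟨c, hc0, hvc⟩ := hγ
  have hvcinv : v c⁻¹ = ((-γ : ℝ) : WithTop ℝ) := by
    rw [v.map_inv, hvc]; push_cast; ring
  -- the polynomial closure is always contained in the closed ball
  have hcb : ∀ y : K,
      (∀ f : Polynomial K,
        (∀ x : K, v (x - α) = (γ : WithTop ℝ) → 0 ≤ v (f.eval x)) → 0 ≤ v (f.eval y)) →
      (γ : WithTop ℝ) ≤ v (y - α) := by
    intro y hy
    have hint : ∀ x : K, v (x - α) = (γ : WithTop ℝ) →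
        0 ≤ v ((Polynomial.C c⁻¹ * (Polynomial.X - Polynomial.C α)).eval x) := by
      intro x hx
      simp only [Polynomial.eval_mul, Polynomial.eval_C, Polynomial.eval_sub, Polynomial.eval_X]
      rw [v.map_mul, hvcinv, hx, ← WithTop.coe_add]
      norm_num
    have h0 := hy _ hint
    simp only [Polynomial.eval_mul, Polynomial.eval_C, Polynomial.eval_sub,
      Polynomial.eval_X] at h0
    rw [v.map_mul, hvcinv] at h0
    cases hvy : v (y - α) with
    | top => exact le_top
    | coe r =>
      rw [hvy, ← WithTop.coe_add] at h0
      have hr : (0:ℝ) ≤ -γ + r := by exact_mod_cast h0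
      exact_mod_cast (by linarith : γ ≤ r)
  constructor
  · -- Part 1
    intro hyp
    ext y
    simp only [Set.mem_setOf_eq]
    constructor
    · exact hcb y
    · intro hy f hf
      set h : K[X] := f.comp (Polynomial.C c * Polynomial.X + Polynomial.C α) with hh
      have hheval : ∀ z : K, h.eval z = f.eval (c * z + α) := by
        intro z
        rw [hh, Polynomial.eval_comp]
        simp
      have hsph : ∀ u : K, v u = 0 → 0 ≤ v (h.eval u) := by
        intro u hu
        rw [hheval]
        apply hf
        have he : c * u + α - α = c * u := by ring
        rw [he, v.map_mul, hvc, hu, add_zero]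
      have hcoeffs : ∀ i, 0 ≤ v (h.coeff i) := by
        rcases hyp with hnd | hinf
        · exact s16_key_dense v (s16_dense v hrank hnd) h hsph
        · exact s16_key_residue v V hV M hM hinf h hsph
      have hyu : c * (c⁻¹ * (y - α)) + α = y := by field_simp; ring
      have hvu : 0 ≤ v (c⁻¹ * (y - α)) := by
        rw [v.map_mul, hvcinv]
        calc (0 : WithTop ℝ) = ((-γ + γ : ℝ) : WithTop ℝ) := by norm_num
        _ = ((-γ : ℝ) : WithTop ℝ) + ((γ : ℝ) : WithTop ℝ) := by push_cast; rfl
        _ ≤ ((-γ : ℝ) : WithTop ℝ) + v (y - α) := add_le_add le_rfl hy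
      have h1 := s16_eval_nonneg v hvu hcoeffs
      rw [hheval, hyu] at h1
      exact h1
  · -- Part 2
    rintro ⟨⟨ρ, hρ0, hρ⟩, hfin⟩
    ext y
    simp only [Set.mem_setOf_eq]
    constructor
    · intro hy
      have hyball : (γ : WithTop ℝ) ≤ v (y - α) := hcb y hy
      rcases eq_or_lt_of_le hyball with heq | hlt
      · exact heq.symm
      exfalso
      -- minimal positive value ρ' with uniformizer π
      obtain ⟨π₀, hπ₀pos, hπ₀top⟩ := hrank
      have hπ₀0 : π₀ ≠ 0 := v.ne_top_iff.1 hπ₀top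
      obtain ⟨n₀, hn₀⟩ := hρ π₀ hπ₀0
      have hn₀ρpos : 0 < (n₀ : ℝ) * ρ := by
        rw [hn₀] at hπ₀pos
        exact_mod_cast hπ₀pos
      have hn₀pos : 0 < n₀ := by
        by_contra hle
        push_neg at hle
        have : (n₀ : ℝ) ≤ 0 := by exact_mod_cast hle
        nlinarith
      have hQ : ∃ k : ℕ, 0 < k ∧ ∃ x : K, x ≠ 0 ∧ v x = (((k : ℝ) * ρ : ℝ) : WithTop ℝ) := by
        refine ⟨n₀.toNat, by omega, π₀, hπ₀0, ?_⟩
        have hcast : ((n₀.toNat : ℕ) : ℝ) = (n₀ : ℝ) := by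
          rw [← Int.cast_natCast, Int.toNat_of_nonneg (le_of_lt hn₀pos)]
        rw [hn₀, hcast]
      set k₀ := Nat.find hQ with hk₀
      obtain ⟨hk₀pos, π, hπ0, hπv⟩ := Nat.find_spec hQ
      set ρ' : ℝ := (k₀ : ℝ) * ρ with hρ'
      have hρ'pos : 0 < ρ' := by
        have : (0:ℝ) < (k₀ : ℝ) := by exact_mod_cast hk₀pos
        nlinarith
      have hπinv : v π⁻¹ = ((-ρ' : ℝ) : WithTop ℝ) := by
        rw [v.map_inv, hπv]; push_cast; ring
      have hminval : ∀ z : K, z ≠ 0 → 0 < v z → ((ρ' : ℝ) : WithTop ℝ) ≤ v z := by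
        intro z hz hvz
        obtain ⟨nz, hnz⟩ := hρ z hz
        have hnzρpos : 0 < (nz : ℝ) * ρ := by
          rw [hnz] at hvz
          exact_mod_cast hvz
        have hnzpos : 0 < nz := by
          by_contra hle
          push_neg at hle
          have : (nz : ℝ) ≤ 0 := by exact_mod_cast hle
          nlinarith
        have hk₀le : k₀ ≤ nz.toNat := by
          apply Nat.find_min' hQ
          refine ⟨by omega, z, hz, ?_⟩
          have hcast : ((nz.toNat : ℕ) : ℝ) = (nz : ℝ) := by
            rw [← Int.cast_natCast, Int.toNat_of_nonneg (le_of_lt hnzpos)]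
          rw [hnz, hcast]
        rw [hnz, hρ']
        have h7 : (k₀ : ℝ) * ρ ≤ (nz : ℝ) * ρ := by
          have h8 : (k₀ : ℝ) ≤ (nz : ℝ) := by
            have hcast2 : ((nz.toNat : ℕ) : ℝ) = (nz : ℝ) := by
              rw [← Int.cast_natCast, Int.toNat_of_nonneg (le_of_lt hnzpos)]
            rw [← hcast2]
            exact_mod_cast hk₀le
          nlinarith
        exact_mod_cast h7
      -- residue representatives
      haveI := hfin
      haveI := Fintype.ofFinite (V ⧸ M)
      have hsurj : Function.Surjective (Ideal.Quotient.mk M) := Ideal.Quotient.mk_surjective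
      set rep : V ⧸ M → V := Function.surjInv hsurj with hrepdef
      have hrep : ∀ z, Ideal.Quotient.mk M (rep z) = z := fun z => Function.surjInv_eq hsurj z
      set T : Finset K :=
        (Finset.univ.filter (fun z : V ⧸ M => z ≠ 0)).image (fun z => ((rep z : V) : K)) with hT
      have hT0 : ∀ t ∈ T, v t = 0 := by
        intro t ht
        rw [hT, Finset.mem_image] at ht
        obtain ⟨z, hzmem, rfl⟩ := ht
        rw [Finset.mem_filter] at hzmem
        have hnM : rep z ∉ M := by
          intro hh
          exact hzmem.2 (by rw [← hrep z]; exact Ideal.Quotient.eq_zero_iff_mem.2 hh)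
        exact le_antisymm (not_lt.1 fun hh => hnM ((hM _).2 hh)) ((hV _).1 (rep z).2)
      have hTcover : ∀ u : K, v u = 0 → ∃ t ∈ T, 0 < v (u - t) := by
        intro u hu
        have huV : u ∈ V := (hV u).2 (le_of_eq hu.symm)
        set uV : V := ⟨u, huV⟩ with huV'
        have hz0 : Ideal.Quotient.mk M uV ≠ 0 := by
          intro hh
          have := (hM uV).1 (Ideal.Quotient.eq_zero_iff_mem.1 hh)
          rw [huV'] at this
          simp only at this
          rw [hu] at this
          exact lt_irrefl _ this
        refine ⟨((rep (Ideal.Quotient.mk M uV) : V) : K), ?_, ?_⟩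
        · rw [hT, Finset.mem_image]
          exact ⟨Ideal.Quotient.mk M uV, Finset.mem_filter.2 ⟨Finset.mem_univ _, hz0⟩, rfl⟩
        · have hmem : uV - rep (Ideal.Quotient.mk M uV) ∈ M := by
            rw [← Ideal.Quotient.eq_zero_iff_mem, RingHom.map_sub, hrep, sub_self]
          have hres := (hM _).1 hmem
          push_cast at hres
          exact hres
      -- the polynomial
      set f : K[X] := Polynomial.C π⁻¹ *
        ∏ t ∈ T, (Polynomial.C c⁻¹ * (Polynomial.X - Polynomial.C α) - Polynomial.C t) with hf
      have hfeval : ∀ x : K, f.eval x = π⁻¹ * ∏ t ∈ T, (c⁻¹ * (x - α) - t) := by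
        intro x
        rw [hf]
        simp [Polynomial.eval_prod]
      have hint : ∀ x : K, v (x - α) = (γ : WithTop ℝ) → 0 ≤ v (f.eval x) := by
        intro x hx
        rw [hfeval]
        have hw : v (c⁻¹ * (x - α)) = 0 := by
          rw [v.map_mul, hvcinv, hx, ← WithTop.coe_add]
          norm_num
        obtain ⟨t₀, ht₀T, ht₀⟩ := hTcover _ hw
        rw [← Finset.mul_prod_erase T _ ht₀T, v.map_mul, hπinv, v.map_mul]
        have h1 : ((ρ' : ℝ) : WithTop ℝ) ≤ v (c⁻¹ * (x - α) - t₀) := by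
          rcases eq_or_ne (c⁻¹ * (x - α)) t₀ with heq2 | hne2
          · rw [heq2, sub_self, v.map_zero]; exact le_top
          · exact hminval _ (sub_ne_zero.2 hne2) ht₀
        have h2 : 0 ≤ v (∏ t ∈ T.erase t₀, (c⁻¹ * (x - α) - t)) := by
          apply s16_prod_nonneg
          intro t ht
          apply v.map_le_sub
          · rw [hw]
          · rw [hT0 t (Finset.mem_of_mem_erase ht)]
        calc (0 : WithTop ℝ) = ((-ρ' + ρ' : ℝ) : WithTop ℝ) := by norm_num
        _ = ((-ρ' : ℝ) : WithTop ℝ) + (((ρ' : ℝ) : WithTop ℝ) + 0) := by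
              rw [add_zero, WithTop.coe_add]
        _ ≤ ((-ρ' : ℝ) : WithTop ℝ) + (v (c⁻¹ * (x - α) - t₀) +
              v (∏ t ∈ T.erase t₀, (c⁻¹ * (x - α) - t))) :=
            add_le_add le_rfl (add_le_add h1 h2)
      have h0 := hy f hint
      rw [hfeval] at h0
      have hw' : 0 < v (c⁻¹ * (y - α)) := by
        rw [v.map_mul, hvcinv]
        have : ((-γ : ℝ) : WithTop ℝ) + ((γ : ℝ) : WithTop ℝ) <
            ((-γ : ℝ) : WithTop ℝ) + v (y - α) :=
          WithTop.add_lt_add_left (WithTop.coe_ne_top) hlt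
        calc (0 : WithTop ℝ) = ((-γ : ℝ) : WithTop ℝ) + ((γ : ℝ) : WithTop ℝ) := by
              rw [← WithTop.coe_add]; norm_num
        _ < ((-γ : ℝ) : WithTop ℝ) + v (y - α) := this
      have hprod : v (∏ t ∈ T, (c⁻¹ * (y - α) - t)) = 0 := by
        apply s16_prod_units
        intro t ht
        have hvt : v t = 0 := hT0 t ht
        have hlt2 : v t < v (c⁻¹ * (y - α)) := by rw [hvt]; exact hw'
        rw [v.map_sub_eq_of_lt_right hlt2, hvt]
      rw [v.map_mul, hπinv, hprod, add_zero] at h0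
      have : (0:ℝ) ≤ -ρ' := by exact_mod_cast h0
      linarith
    · intro hy f hf
      exact hf y hy
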